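/- For all t ≥ 1, A(t-1)/A(t) ≤ (2/3)^{t-1}. -/

import Mathlib

open Finset Nat

/-- `A n = ∏_{k=0}^{n-1} (3k+1)!/(n+k)!`, the ASM numbers (as rationals), with `A 0 = 1`. -/
def A (n : ℕ) : ℚ := ∏ k ∈ Finset.range n, ((3 * k + 1)! : ℚ) / ((n + k)! : ℚ)

lemma fact_prod (c m : ℕ) : (c)! * ∏ k ∈ Finset.range m, (c + 1 + k) = (c + m)! := by
  induction m with
  | zero => simp
  | succ m ih =>
    rw [Finset.prod_range_succ, ← Nat.mul_assoc, ih]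
    rw [show c + (m + 1) = (c + m) + 1 by ring, Nat.factorial_succ]
    ring

lemma A_pos (n : ℕ) : 0 < A n := by
  apply Finset.prod_pos
  intro k _
  positivity

lemma ratio_eq (n : ℕ) :
    A n / A (n + 1) = ∏ k ∈ Finset.range n, ((n + 1 + k : ℚ) / (2 * n + 2 + k)) := by
  have hfact : ∀ m : ℕ, ((m ! : ℚ)) ≠ 0 := fun m => by positivity
  unfold A
  rw [Finset.prod_range_succ]
  have key : ∀ k ∈ Finset.range n,
      ((3 * k + 1)! : ℚ) / ((n + k)!) =
      (((3 * k + 1)! : ℚ) / ((n + 1 + k)!)) * ((n + 1 + k : ℚ)) := by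
    intro k _
    have h : ((n + 1 + k)! : ℚ) = ((n + 1 + k : ℕ) : ℚ) * ((n + k)! : ℚ) := by
      rw [show n + 1 + k = (n + k) + 1 by ring, Nat.factorial_succ]
      push_cast
      ring
    have h1 : ((n + 1 + k : ℕ) : ℚ) ≠ 0 := by positivity
    have h2 : ((n + k)! : ℚ) ≠ 0 := hfact _
    rw [h]
    push_cast
    field_simp
  rw [Finset.prod_congr rfl key, Finset.prod_mul_distrib]
  have h1 : ((3 * n + 1)! : ℚ) = ((2 * n + 1)!) * ∏ k ∈ Finset.range n, ((2 * n + 2 + k : ℚ)) := by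
    have := fact_prod (2 * n + 1) n
    have h2 : 2 * n + 1 + n = 3 * n + 1 := by ring
    rw [h2] at this
    rw [← this]
    push_cast
    ring_nf
  have h3 : n + 1 + n = 2 * n + 1 := by ring
  rw [h3, h1]
  rw [Finset.prod_div_distrib, Finset.prod_div_distrib]
  have hprod : (∏ k ∈ Finset.range n, ((2 * n + 2 + k : ℚ))) ≠ 0 := by
    apply Finset.prod_ne_zero_iff.mpr; intro k _; positivity
  have hprodf : (∏ k ∈ Finset.range n, ((3 * k + 1)! : ℚ)) ≠ 0 := by
    apply Finset.prod_ne_zero_iff.mpr; intro k _; exact hfact _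
  have hprodg : (∏ k ∈ Finset.range n, ((n + 1 + k)! : ℚ)) ≠ 0 := by
    apply Finset.prod_ne_zero_iff.mpr; intro k _; exact hfact _
  field_simp

theorem stmt_3 (t : ℕ) (ht : 1 ≤ t) :
    A (t - 1) / A t ≤ (2 / 3 : ℚ) ^ (t - 1) := by
  obtain ⟨n, rfl⟩ : ∃ n, t = n + 1 := ⟨t - 1, (Nat.succ_pred_eq_of_pos ht).symm⟩
  simp only [Nat.add_sub_cancel]
  rw [ratio_eq]
  calc ∏ k ∈ Finset.range n, ((n + 1 + k : ℚ) / (2 * n + 2 + k))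
      ≤ ∏ k ∈ Finset.range n, (2 / 3 : ℚ) := by
        apply Finset.prod_le_prod
        · intro k _; positivity
        · intro k hk
          rw [div_le_div_iff₀ (by positivity) (by norm_num)]
          have : (k : ℚ) ≤ n := by exact_mod_cast (Finset.mem_range.mp hk).le
          nlinarith
    _ = (2 / 3 : ℚ) ^ n := by simp [div_pow]
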